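/- In the key step of the 3/2-degree stripability proof: if a vertex v of an edge-labeled graph with labels in [d] and degree deg(v) ≤ (3/2)d − 1 is such that every label a ∈ [d] appears on some edge at v, and for no label a is the star at v a-exclusive, then v has at most d − 1 neighbors. -/

import Mathlib

/-- Star of an edge-labeled graph at a vertex `v`: the type `V` indexes the
other vertices, and `lab w` is the (possibly empty) label set of the edge `(v,w)`. -/
theorem stmt13 (d : ℕ) (V : Type) [Fintype V] [DecidableEq V]
    (lab : V → Finset (Fin d))
    (hdeg : 2 * (∑ w : V, (lab w).card) + 2 ≤ 3 * d)
    (hall : ∀ a : Fin d, ∃ w : V, a ∈ lab w)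
    (hnoexc : ∀ a : Fin d, ∃ w : V, a ∈ lab w ∧ lab w ≠ {a}) :
    (Finset.univ.filter (fun w : V => (lab w).Nonempty)).card ≤ d - 1 := by
  classical
  set N := Finset.univ.filter (fun w : V => (lab w).Nonempty) with hN
  set B := Finset.univ.filter (fun w : V => 2 ≤ (lab w).card) with hB
  have hBN : B ⊆ N := by
    intro w hw
    simp only [hB, hN, Finset.mem_filter, Finset.mem_univ, true_and] at hw ⊢
    exact Finset.card_pos.mp (by omega)
  -- every label lies on an edge in B
  have hd : d ≤ ∑ w ∈ B, (lab w).card := by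
    have hsub : (Finset.univ : Finset (Fin d)) ⊆ B.biUnion lab := by
      intro a _
      obtain ⟨w, hw, hne⟩ := hnoexc a
      have hss : ({a} : Finset (Fin d)) ⊂ lab w :=
        lt_of_le_of_ne (Finset.singleton_subset_iff.mpr hw) (Ne.symm hne)
      have h2 : 2 ≤ (lab w).card := by
        have := Finset.card_lt_card hss
        simp at this; omega
      exact Finset.mem_biUnion.mpr ⟨w, by simp [hB, h2], hw⟩
    calc d = (Finset.univ : Finset (Fin d)).card := by simp
      _ ≤ (B.biUnion lab).card := Finset.card_le_card hsub
      _ ≤ ∑ w ∈ B, (lab w).card := Finset.card_biUnion_le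
  have h2B : 2 * B.card ≤ ∑ w ∈ B, (lab w).card := by
    calc 2 * B.card = ∑ _w ∈ B, 2 := by
          rw [Finset.sum_const]; ring
      _ ≤ ∑ w ∈ B, (lab w).card :=
          Finset.sum_le_sum (fun w hw => by
            simpa [hB] using (Finset.mem_filter.mp hw).2)
  have hNB : (N \ B).card ≤ ∑ w ∈ N \ B, (lab w).card := by
    calc (N \ B).card = ∑ _w ∈ N \ B, 1 := by simp
      _ ≤ ∑ w ∈ N \ B, (lab w).card :=
          Finset.sum_le_sum (fun w hw => by
            have := (Finset.mem_filter.mp (Finset.mem_sdiff.mp hw).1).2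
            exact Finset.card_pos.mpr this)
  have hsplit : ∑ w ∈ B, (lab w).card + ∑ w ∈ N \ B, (lab w).card
      = ∑ w ∈ N, (lab w).card := by
    rw [add_comm, Finset.sum_sdiff hBN]
  have hNuniv : ∑ w ∈ N, (lab w).card ≤ ∑ w : V, (lab w).card :=
    Finset.sum_le_sum_of_subset (Finset.filter_subset _ _)
  have hcardNB : (N \ B).card = N.card - B.card := Finset.card_sdiff_of_subset hBN
  have hBle : B.card ≤ N.card := Finset.card_le_card hBN
  omega
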